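/- Let Σxx, Σ̂xx ∈ ℝ^{dx×dx} and Σyy, Σ̂yy ∈ ℝ^{dy×dy} be symmetric positive definite, let Σxy, Σ̂xy ∈ ℝ^{dx×dy}, and set T = Σxx^{-1/2} Σxy Σyy^{-1/2} and T̂ = Σ̂xx^{-1/2} Σ̂xy Σ̂yy^{-1/2}. Assume ‖T‖ ≤ 1 and ‖T̂‖ ≤ 1, and suppose ‖Σxx^{-1/2}(Σxx^{1/2} − Σ̂xx^{1/2})‖ ≤ a, ‖Σxx^{-1/2}(Σ̂xy − Σxy) Σ̂yy^{-1/2}‖ ≤ ν, and ‖(Σyy^{1/2} − Σ̂yy^{1/2}) Σ̂yy^{-1/2}‖ ≤ b for some a, ν, b ≥ 0. Then ‖T̂ − T‖ ≤ a + ν + b, and consequently the largest singular values satisfy |σ1(T̂) − σ1(T)| ≤ a + ν + b. -/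

import Mathlib

open Matrix Finset

/-- Euclidean norm of a vector in `ℝ^d`. -/
noncomputable def vnorm {n : Type*} [Fintype n] (x : n → ℝ) : ℝ := Real.sqrt (x ⬝ᵥ x)

/-- Spectral (operator) norm of a real matrix: the supremum of `‖A x‖` over unit vectors `x`. -/
noncomputable def specNorm {m n : Type*} [Fintype m] [Fintype n] (A : Matrix m n ℝ) : ℝ :=
  sSup {c : ℝ | ∃ x : n → ℝ, vnorm x = 1 ∧ c = vnorm (A.mulVec x)}

/-- The positive semidefinite square root of a positive semidefinite matrix (the definition
Mathlib had in December 2024, since removed). -/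
noncomputable def Matrix.PosSemidef.sqrt {n : Type*} [Fintype n] [DecidableEq n] {𝕜 : Type*} [RCLike 𝕜]
    [PartialOrder 𝕜]     {A : Matrix n n 𝕜} (hA : A.PosSemidef) : Matrix n n 𝕜 :=
  hA.1.eigenvectorUnitary.1 * diagonal ((↑) ∘ (√·) ∘ hA.1.eigenvalues) *
  (star hA.1.eigenvectorUnitary : Matrix n n 𝕜)

set_option maxHeartbeats 1000000
open scoped Matrix.Norms.L2Operator


lemma vnorm_eq_norm {n : Type*} [Fintype n] (x : n → ℝ) :
    vnorm x = ‖(WithLp.equiv 2 (n → ℝ)).symm x‖ := by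
  rw [vnorm, EuclideanSpace.norm_eq]
  congr 1
  simp [dotProduct, Real.norm_eq_abs, sq_abs, sq]

lemma specNorm_eq_norm {m n : Type*} [Fintype m] [Fintype n] [DecidableEq n]
    (A : Matrix m n ℝ) : specNorm A = ‖A‖ := by
  set S := {c : ℝ | ∃ x : n → ℝ, vnorm x = 1 ∧ c = vnorm (A.mulVec x)} with hS
  have hub : ∀ c ∈ S, c ≤ ‖A‖ := by
    rintro c ⟨x, hx, rfl⟩
    have h := A.l2_opNorm_mulVec ((WithLp.equiv 2 (n → ℝ)).symm x)
    rw [show ((WithLp.equiv 2 (n → ℝ)).symm x : n → ℝ) = x from rfl] at h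
    rw [vnorm_eq_norm] at hx ⊢
    calc ‖(WithLp.equiv 2 (m → ℝ)).symm (A.mulVec x)‖
        ≤ ‖A‖ * ‖(WithLp.equiv 2 (n → ℝ)).symm x‖ := h
      _ = ‖A‖ := by rw [hx, mul_one]
  have hbdd : BddAbove S := ⟨‖A‖, hub⟩
  have h0 : (0:ℝ) ≤ sSup S := by
    rcases Set.eq_empty_or_nonempty S with h | ⟨c, hc⟩
    · rw [h, Real.sSup_empty]
    · obtain ⟨x, hx, rfl⟩ := hc
      exact le_trans (Real.sqrt_nonneg _) (le_csSup hbdd ⟨x, hx, rfl⟩)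
  refine le_antisymm (Real.sSup_le hub (norm_nonneg A)) ?_
  rw [Matrix.l2_opNorm_def]
  refine ContinuousLinearMap.opNorm_le_bound _ h0 fun x => ?_
  rcases eq_or_ne x 0 with rfl | hx
  · simp
  · set u : EuclideanSpace ℝ n := ‖x‖⁻¹ • x with hu
    have hxn : ‖x‖ ≠ 0 := norm_ne_zero_iff.2 hx
    have hun : ‖u‖ = 1 := by
      rw [hu, norm_smul, norm_inv, norm_norm, inv_mul_cancel₀ hxn]
    have hmem : vnorm (A.mulVec (WithLp.equiv 2 (n → ℝ) u)) ∈ S := by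
      refine ⟨WithLp.equiv 2 (n → ℝ) u, ?_, rfl⟩
      rw [vnorm_eq_norm]; simpa using hun
    have hle : vnorm (A.mulVec (WithLp.equiv 2 (n → ℝ) u)) ≤ sSup S := le_csSup hbdd hmem
    have happ : ∀ y : EuclideanSpace ℝ n,
        ‖((Matrix.toEuclideanLin.trans LinearMap.toContinuousLinearMap) A) y‖
          = vnorm (A.mulVec (WithLp.equiv 2 (n → ℝ) y)) := by
      intro y
      rw [vnorm_eq_norm]
      simp only [LinearEquiv.trans_apply, LinearMap.coe_toContinuousLinearMap',
        Matrix.toEuclideanLin_apply]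
      rfl
    have hlin : ((Matrix.toEuclideanLin.trans LinearMap.toContinuousLinearMap) A) x
        = ‖x‖ • ((Matrix.toEuclideanLin.trans LinearMap.toContinuousLinearMap) A) u := by
      rw [hu, _root_.map_smul, smul_smul, mul_inv_cancel₀ hxn, one_smul]
    calc ‖((Matrix.toEuclideanLin.trans LinearMap.toContinuousLinearMap) A) x‖
        = ‖x‖ * ‖((Matrix.toEuclideanLin.trans LinearMap.toContinuousLinearMap) A) u‖ := by
          rw [hlin, norm_smul, norm_norm]
      _ ≤ ‖x‖ * sSup S := by
          refine mul_le_mul_of_nonneg_left ?_ (norm_nonneg x)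
          rw [happ]; exact hle
      _ = sSup S * ‖x‖ := mul_comm _ _

/-- deterministic perturbation bound for the whitened cross-covariance
matrix `T`, and hence for the canonical correlation `σ₁(T)`. -/
theorem stmt_10 {dx dy : ℕ}
    (Sxx Shxx : Matrix (Fin dx) (Fin dx) ℝ) (Syy Shyy : Matrix (Fin dy) (Fin dy) ℝ)
    (Sxy Shxy : Matrix (Fin dx) (Fin dy) ℝ)
    (hxx : Sxx.PosDef) (hhxx : Shxx.PosDef) (hyy : Syy.PosDef) (hhyy : Shyy.PosDef)
    (T : Matrix (Fin dx) (Fin dy) ℝ)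
    (hT : T = (hxx.posSemidef.sqrt)⁻¹ * Sxy * (hyy.posSemidef.sqrt)⁻¹)
    (That : Matrix (Fin dx) (Fin dy) ℝ)
    (hThat : That = (hhxx.posSemidef.sqrt)⁻¹ * Shxy * (hhyy.posSemidef.sqrt)⁻¹)
    (hT1 : specNorm T ≤ 1) (hThat1 : specNorm That ≤ 1)
    (a ν b : ℝ) (ha : 0 ≤ a) (hν : 0 ≤ ν) (hb : 0 ≤ b)
    (h1 : specNorm ((hxx.posSemidef.sqrt)⁻¹ * (hxx.posSemidef.sqrt - hhxx.posSemidef.sqrt)) ≤ a)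
    (h2 : specNorm ((hxx.posSemidef.sqrt)⁻¹ * (Shxy - Sxy) * (hhyy.posSemidef.sqrt)⁻¹) ≤ ν)
    (h3 : specNorm ((hyy.posSemidef.sqrt - hhyy.posSemidef.sqrt) * (hhyy.posSemidef.sqrt)⁻¹) ≤ b) :
    specNorm (That - T) ≤ a + ν + b ∧ |specNorm That - specNorm T| ≤ a + ν + b := by
  set P := hxx.posSemidef.sqrt with hPdef
  set Ph := hhxx.posSemidef.sqrt with hPhdef
  set Q := hyy.posSemidef.sqrt with hQdef
  set Qh := hhyy.posSemidef.sqrt with hQhdef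
  have detUnit : ∀ {d : ℕ} (M : Matrix (Fin d) (Fin d) ℝ) (hM : M.PosDef),
      IsUnit (hM.posSemidef.sqrt).det := by
    intro d M hM
    have h : hM.posSemidef.sqrt * hM.posSemidef.sqrt = M := by
      have hu : (star hM.posSemidef.1.eigenvectorUnitary : Matrix (Fin d) (Fin d) ℝ) *
          hM.posSemidef.1.eigenvectorUnitary = 1 := Unitary.coe_star_mul_self _
      conv_rhs => rw [hM.posSemidef.1.spectral_theorem, Unitary.conjStarAlgAut_apply]
      simp only [Matrix.PosSemidef.sqrt, Matrix.mul_assoc]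
      rw [← Matrix.mul_assoc (star _ : Matrix (Fin d) (Fin d) ℝ) _ _, hu, Matrix.one_mul,
        ← Matrix.mul_assoc (diagonal _) (diagonal _), diagonal_mul_diagonal]
      congr 3
      funext i
      simp [Real.mul_self_sqrt (hM.posSemidef.eigenvalues_nonneg i)]
    have hdet : (hM.posSemidef.sqrt).det * (hM.posSemidef.sqrt).det = M.det := by
      rw [← Matrix.det_mul, h]
    have hMd : M.det ≠ 0 := hM.det_pos.ne'
    refine isUnit_iff_ne_zero.2 fun h0 => hMd ?_
    rw [← hdet, h0, mul_zero]
  have hPd : IsUnit P.det := detUnit Sxx hxx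
  have hPhd : IsUnit Ph.det := detUnit Shxx hhxx
  have hQd : IsUnit Q.det := detUnit Syy hyy
  have hQhd : IsUnit Qh.det := detUnit Shyy hhyy
  have cP : ∀ (X : Matrix (Fin dx) (Fin dy) ℝ), P⁻¹ * (P * X) = X :=
    fun X => Matrix.nonsing_inv_mul_cancel_left P X hPd
  have cPh : ∀ (X : Matrix (Fin dx) (Fin dy) ℝ), Ph * (Ph⁻¹ * X) = X :=
    fun X => Matrix.mul_nonsing_inv_cancel_left Ph X hPhd
  have cQ : ∀ (X : Matrix (Fin dy) (Fin dy) ℝ), Q⁻¹ * (Q * X) = X :=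
    fun X => Matrix.nonsing_inv_mul_cancel_left Q X hQd
  have eQh : Qh * Qh⁻¹ = 1 := Matrix.mul_nonsing_inv Qh hQhd
  have key : That - T =
      P⁻¹ * (P - Ph) * That + P⁻¹ * (Shxy - Sxy) * Qh⁻¹ + T * ((Q - Qh) * Qh⁻¹) := by
    rw [hT, hThat]
    simp only [Matrix.mul_sub, Matrix.sub_mul, Matrix.mul_assoc, cP, cPh, cQ, eQh,
      Matrix.mul_one]
    abel
  rw [specNorm_eq_norm] at h1 h2 h3 hT1 hThat1
  rw [specNorm_eq_norm, specNorm_eq_norm, specNorm_eq_norm]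
  have hmain : ‖That - T‖ ≤ a + ν + b := by
    rw [key]
    refine le_trans (norm_add₃_le) ?_
    have b1 : ‖P⁻¹ * (P - Ph) * That‖ ≤ a := by
      calc ‖P⁻¹ * (P - Ph) * That‖ ≤ ‖P⁻¹ * (P - Ph)‖ * ‖That‖ :=
            Matrix.l2_opNorm_mul _ _
        _ ≤ a * 1 := mul_le_mul h1 hThat1 (norm_nonneg _) ha
        _ = a := mul_one a
    have b3 : ‖T * ((Q - Qh) * Qh⁻¹)‖ ≤ b := by
      calc ‖T * ((Q - Qh) * Qh⁻¹)‖ ≤ ‖T‖ * ‖(Q - Qh) * Qh⁻¹‖ :=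
            Matrix.l2_opNorm_mul _ _
        _ ≤ 1 * b := mul_le_mul hT1 h3 (norm_nonneg _) zero_le_one
        _ = b := one_mul b
    linarith [h2]
  exact ⟨hmain, le_trans (abs_norm_sub_norm_le That T) hmain⟩
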